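/- Let q ≥ 5 be a prime and let S denote the image of SL(2, ZMod q) under the natural homomorphism to PGL(2,q). If Y is a proper subgroup of PGL(2,q) such that Y·S = PGL(2,q) and the index |PGL(2,q):Y| is odd, then q divides |PGL(2,q):Y|. (Claim from the proof of Lemma 3.2, derived from Dickson's classification, for the almost simple group PGL(2,q)) -/

import Mathlib

/-- The projective special linear group `PSL(2,q)`: the quotient of `SL(2, ZMod q)`
by its center. -/
abbrev PSL (q : ℕ) : Type :=
  Matrix.SpecialLinearGroup (Fin 2) (ZMod q) ⧸
    Subgroup.center (Matrix.SpecialLinearGroup (Fin 2) (ZMod q))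

/-- The projective general linear group `PGL(2,q)`: the quotient of `GL(2, ZMod q)`
by its center. -/
abbrev PGL (q : ℕ) : Type :=
  Matrix.GeneralLinearGroup (Fin 2) (ZMod q) ⧸
    Subgroup.center (Matrix.GeneralLinearGroup (Fin 2) (ZMod q))

/-- The socle of `PGL(2,q)`: the image of `SL(2, ZMod q)` under the natural map
`SL(2, ZMod q) → GL(2, ZMod q) → PGL(2,q)`. -/
noncomputable def socPGL (q : ℕ) : Subgroup (PGL q) :=
  ((QuotientGroup.mk' (Subgroup.center (Matrix.GeneralLinearGroup (Fin 2) (ZMod q)))).comp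
    (Matrix.SpecialLinearGroup.toGL)).range

open Matrix Subgroup

section Aux
variable {q : ℕ} [Fact (Nat.Prime q)]

def E12 (q : ℕ) (t : ZMod q) : Matrix.SpecialLinearGroup (Fin 2) (ZMod q) :=
  ⟨!![1, t; 0, 1], by simp [Matrix.det_fin_two_of]⟩

def E21 (q : ℕ) (t : ZMod q) : Matrix.SpecialLinearGroup (Fin 2) (ZMod q) :=
  ⟨!![1, 0; t, 1], by simp [Matrix.det_fin_two_of]⟩

@[simp] lemma E12_coe (t : ZMod q) : (E12 q t : Matrix (Fin 2) (Fin 2) (ZMod q)) = !![1, t; 0, 1] := rfl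
@[simp] lemma E21_coe (t : ZMod q) : (E21 q t : Matrix (Fin 2) (Fin 2) (ZMod q)) = !![1, 0; t, 1] := rfl

lemma E12_mul (s t : ZMod q) : E12 q s * E12 q t = E12 q (s + t) := by
  apply Subtype.ext; simp [Matrix.mul_fin_two, add_comm]

lemma E21_mul (s t : ZMod q) : E21 q s * E21 q t = E21 q (s + t) := by
  apply Subtype.ext; simp [Matrix.mul_fin_two, add_comm]

@[simp] lemma E12_zero : E12 q 0 = 1 := by
  apply Subtype.ext; simp [Matrix.SpecialLinearGroup.coe_one, Matrix.one_fin_two]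

@[simp] lemma E21_zero : E21 q 0 = 1 := by
  apply Subtype.ext; simp [Matrix.SpecialLinearGroup.coe_one, Matrix.one_fin_two]

lemma E12_inv (t : ZMod q) : (E12 q t)⁻¹ = E12 q (-t) := by
  apply inv_eq_of_mul_eq_one_right; rw [E12_mul]; simp

lemma E21_inv (t : ZMod q) : (E21 q t)⁻¹ = E21 q (-t) := by
  apply inv_eq_of_mul_eq_one_right; rw [E21_mul]; simp

lemma E12_pow (n : ℕ) : (E12 q 1) ^ n = E12 q (n : ZMod q) := by
  induction n with
  | zero => simp
  | succ n ih => rw [pow_succ, ih, E12_mul]; push_cast; ring_nf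

lemma E21_pow (n : ℕ) : (E21 q 1) ^ n = E21 q (n : ZMod q) := by
  induction n with
  | zero => simp
  | succ n ih => rw [pow_succ, ih, E21_mul]; push_cast; ring_nf

lemma E12_zpow (k : ℤ) : (E12 q 1) ^ k = E12 q (k : ZMod q) := by
  cases k with
  | ofNat n => rw [Int.ofNat_eq_natCast, zpow_natCast, E12_pow]; push_cast; ring_nf
  | negSucc n =>
      rw [zpow_negSucc, E12_pow, E12_inv]
      congr 1
      push_cast
      ring

/-- the projection SL(2,q) → PGL(2,q) -/
noncomputable def projSL (q : ℕ) : Matrix.SpecialLinearGroup (Fin 2) (ZMod q) →*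
    (Matrix.GeneralLinearGroup (Fin 2) (ZMod q) ⧸
      Subgroup.center (Matrix.GeneralLinearGroup (Fin 2) (ZMod q))) :=
  (QuotientGroup.mk' (Subgroup.center (Matrix.GeneralLinearGroup (Fin 2) (ZMod q)))).comp
    (Matrix.SpecialLinearGroup.toGL)

lemma comm_of_projSL_eq_one {A : Matrix.SpecialLinearGroup (Fin 2) (ZMod q)}
    (h : projSL q A = 1) (B : Matrix.SpecialLinearGroup (Fin 2) (ZMod q)) :
    (B : Matrix (Fin 2) (Fin 2) (ZMod q)) * A = (A : Matrix (Fin 2) (Fin 2) (ZMod q)) * B := by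
  have h' : Matrix.SpecialLinearGroup.toGL A ∈
      Subgroup.center (Matrix.GeneralLinearGroup (Fin 2) (ZMod q)) := by
    rwa [projSL, MonoidHom.comp_apply, QuotientGroup.mk'_apply, QuotientGroup.eq_one_iff] at h
  have := Subgroup.mem_center_iff.mp h' (Matrix.SpecialLinearGroup.toGL B)
  exact congrArg Units.val this

lemma projSL_E12_eq_one_iff {t : ZMod q} (h : projSL q (E12 q t) = 1) : t = 0 := by
  have h' := comm_of_projSL_eq_one h (E21 q 1)
  simp [Matrix.mul_fin_two] at h'
  exact h'


lemma projSL_E21_eq_one_iff {t : ZMod q} (h : projSL q (E21 q t) = 1) : t = 0 := by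
  have h' := comm_of_projSL_eq_one h (E12 q 1)
  simp [Matrix.mul_fin_two] at h'
  exact h'

lemma orderOf_projSL_E12 : orderOf (projSL q (E12 q 1)) = q := by
  have hq := (Fact.out : Nat.Prime q)
  apply orderOf_eq_prime
  · rw [← map_pow, E12_pow, ZMod.natCast_self, E12_zero, _root_.map_one]
  · intro h
    have := projSL_E12_eq_one_iff (t := 1) (by simpa using h)
    simp at this

lemma orderOf_projSL_E21 : orderOf (projSL q (E21 q 1)) = q := by
  have hq := (Fact.out : Nat.Prime q)
  apply orderOf_eq_prime
  · rw [← map_pow, E21_pow, ZMod.natCast_self, E21_zero, _root_.map_one]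
  · intro h
    have := projSL_E21_eq_one_iff (t := 1) (by simpa using h)
    simp at this

lemma projSL_E21_not_mem_zpowers :
    projSL q (E21 q 1) ∉ Subgroup.zpowers (projSL q (E12 q 1)) := by
  rintro ⟨k, hk⟩
  simp only at hk
  rw [← map_zpow, E12_zpow] at hk
  set c : ZMod q := (k : ZMod q) with hc
  have h1 : projSL q (E12 q c * (E21 q 1)⁻¹) = 1 := by
    rw [_root_.map_mul, hk, _root_.map_inv, mul_inv_cancel]
  have h' := comm_of_projSL_eq_one h1 (E12 q 1)
  rw [E21_inv] at h'
  simp [Matrix.mul_fin_two] at h'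


/-- the generating set -/
def elemSet (q : ℕ) : Set (Matrix.SpecialLinearGroup (Fin 2) (ZMod q)) :=
  {x | (∃ t, x = E12 q t) ∨ (∃ t, x = E21 q t)}

lemma mem_closure_elem_of_ne_zero (A : Matrix.SpecialLinearGroup (Fin 2) (ZMod q))
    (hc : (A : Matrix (Fin 2) (Fin 2) (ZMod q)) 1 0 ≠ 0) :
    A ∈ Subgroup.closure (elemSet q) := by
  set a := (A : Matrix (Fin 2) (Fin 2) (ZMod q)) 0 0 with ha
  set b := (A : Matrix (Fin 2) (Fin 2) (ZMod q)) 0 1 with hb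
  set c := (A : Matrix (Fin 2) (Fin 2) (ZMod q)) 1 0 with hcc
  set d := (A : Matrix (Fin 2) (Fin 2) (ZMod q)) 1 1 with hd
  have hdet : a * d - b * c = 1 := by
    rw [ha, hb, hcc, hd, ← Matrix.det_fin_two]; exact A.2
  set t : ZMod q := (1 - a) * c⁻¹ with ht
  have htc : t * c = 1 - a := by rw [ht]; field_simp
  have key : E21 q (-c) * (E12 q t * A) = E12 q (b + t * d) := by
    apply Subtype.ext
    simp only [Matrix.SpecialLinearGroup.coe_mul, E12_coe, E21_coe]
    rw [Matrix.eta_fin_two (A : Matrix (Fin 2) (Fin 2) (ZMod q)), ← ha, ← hb, ← hcc, ← hd]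
    rw [Matrix.mul_fin_two, Matrix.mul_fin_two]
    ext i j
    fin_cases i <;> fin_cases j <;>
      simp only [Matrix.cons_val', Matrix.cons_val_zero, Matrix.cons_val_one, Matrix.head_cons,
        Matrix.head_fin_const, Matrix.empty_val', Matrix.cons_val_fin_one, Fin.zero_eta,
        Fin.mk_one, Matrix.of_apply]
    · linear_combination htc
    · ring
    · linear_combination (-c) * htc
    · linear_combination (-d) * htc + hdet
  have h12 : ∀ s, E12 q s ∈ Subgroup.closure (elemSet q) := fun s =>
    Subgroup.subset_closure (Or.inl ⟨s, rfl⟩)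
  have h21 : ∀ s, E21 q s ∈ Subgroup.closure (elemSet q) := fun s =>
    Subgroup.subset_closure (Or.inr ⟨s, rfl⟩)
  have hA : A = (E12 q t)⁻¹ * ((E21 q (-c))⁻¹ * E12 q (b + t * d)) := by
    rw [← key]; group
  rw [hA]
  exact mul_mem (inv_mem (h12 t)) (mul_mem (inv_mem (h21 (-c))) (h12 _))

lemma mem_closure_elem (A : Matrix.SpecialLinearGroup (Fin 2) (ZMod q)) :
    A ∈ Subgroup.closure (elemSet q) := by
  by_cases hc : (A : Matrix (Fin 2) (Fin 2) (ZMod q)) 1 0 ≠ 0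
  · exact mem_closure_elem_of_ne_zero A hc
  · push_neg at hc
    have hdet : (A : Matrix (Fin 2) (Fin 2) (ZMod q)) 0 0 *
        (A : Matrix (Fin 2) (Fin 2) (ZMod q)) 1 1 = 1 := by
      have h2 := A.2
      rw [Matrix.det_fin_two] at h2
      rw [hc] at h2
      linear_combination h2
    have ha : (A : Matrix (Fin 2) (Fin 2) (ZMod q)) 0 0 ≠ 0 :=
      left_ne_zero_of_mul_eq_one hdet
    have hB : ((E21 q 1 * A : Matrix.SpecialLinearGroup (Fin 2) (ZMod q)) :
        Matrix (Fin 2) (Fin 2) (ZMod q)) 1 0 ≠ 0 := by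
      simpa [Matrix.SpecialLinearGroup.coe_mul, Matrix.mul_apply, Fin.sum_univ_two, hc] using ha
    have hmem := mem_closure_elem_of_ne_zero _ hB
    have hA : A = (E21 q 1)⁻¹ * (E21 q 1 * A) := by group
    rw [hA]
    exact mul_mem (inv_mem (Subgroup.subset_closure (Or.inr ⟨1, rfl⟩))) hmem

end Aux

lemma divisor_eq {q d : ℕ} (hq2 : 2 ≤ q) (hd : d ∣ q ^ 2 - 1) (hmod : d % q = 1)
    (hd1 : d ≠ 1) : d = q + 1 := by
  obtain ⟨p, rfl⟩ : ∃ p, q = p + 2 := ⟨q - 2, by omega⟩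
  obtain ⟨e, he⟩ := hd
  have hsq : (p + 2) ^ 2 = p ^ 2 + 4 * p + 4 := by ring
  have hq2eq : (p + 2) ^ 2 - 1 = p ^ 2 + 4 * p + 3 := by omega
  have hdiv := Nat.div_add_mod d (p + 2)
  set k := d / (p + 2) with hk
  rcases Nat.lt_or_ge k 2 with hk2 | hk2
  · -- k = 0 or 1
    interval_cases k <;> omega
  · exfalso
    have hdge : d ≥ 2 * (p + 2) + 1 := by
      have : (p + 2) * 2 ≤ (p + 2) * k := Nat.mul_le_mul_left _ hk2
      omega
    -- residue of e
    have hr : e % (p + 2) = p + 1 := by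
      have h1 : (d * e) % (p + 2) = e % (p + 2) := by
        rw [Nat.mul_mod, hmod, one_mul, Nat.mod_mod_of_dvd]
        rfl
      have h2 : ((p + 2) ^ 2 - 1) % (p + 2) = p + 1 := by
        have hpp : (p + 2) * (p + 1) = p ^ 2 + 3 * p + 2 := by ring
        have h3 : (p + 2) ^ 2 - 1 = (p + 2) * (p + 1) + (p + 1) := by omega
        rw [h3, Nat.mul_add_mod, Nat.mod_eq_of_lt (by omega)]
      rw [← he, h2] at h1
      omega
    have hege : e ≥ p + 1 := by
      have := Nat.mod_le e (p + 2)
      omega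
    have hmul : (2 * (p + 2) + 1) * (p + 1) ≤ d * e := Nat.mul_le_mul hdge hege
    nlinarith [he, hq2eq, hmul]



/-- Every proper supplement  of the socle of ,  prime, of odd
index has index divisible by . -/
theorem q_dvd_odd_index_PGL (q : ℕ) (hq : Nat.Prime q) (hq5 : 5 ≤ q)
    (Y : Subgroup (PGL q)) (hY : Y ≠ ⊤)
    (hYS : ∀ g : PGL q, ∃ y ∈ Y, ∃ s ∈ socPGL q, g = y * s)
    (hodd : Odd Y.index) :
    q ∣ Y.index := by
  haveI := Fact.mk hq
  haveI : NeZero q := ⟨hq.ne_zero⟩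
  by_contra hqn
  set PG := Matrix.GeneralLinearGroup (Fin 2) (ZMod q) ⧸
      Subgroup.center (Matrix.GeneralLinearGroup (Fin 2) (ZMod q)) with hPG
  -- cardinality of GL
  have hcardGL : Nat.card (GL (Fin 2) (ZMod q)) = (q ^ 2 - 1) * (q ^ 2 - q) := by
    rw [Matrix.card_GL_field]
    simp [Fin.prod_univ_two, ZMod.card]
  -- scalars in the center
  have hZdvd : (q - 1) ∣ Nat.card (Subgroup.center (GL (Fin 2) (ZMod q))) := by
    let f : (ZMod q)ˣ →* GL (Fin 2) (ZMod q) :=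
      Units.map (algebraMap (ZMod q) (Matrix (Fin 2) (Fin 2) (ZMod q))).toMonoidHom
    have hfinj : Function.Injective f := by
      intro a b hab
      have h1 := congrArg (fun u => ((u : GL (Fin 2) (ZMod q)) : Matrix (Fin 2) (Fin 2) (ZMod q)) 0 0) hab
      simp only [f, Units.coe_map, RingHom.toMonoidHom_eq_coe, MonoidHom.coe_coe,
        Matrix.algebraMap_matrix_apply] at h1
      exact Units.ext (by simpa using h1)
    have hrange : f.range ≤ Subgroup.center (GL (Fin 2) (ZMod q)) := by
      rintro x ⟨u, rfl⟩
      rw [Subgroup.mem_center_iff]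
      intro g
      apply Units.ext
      show (g : Matrix (Fin 2) (Fin 2) (ZMod q)) * algebraMap (ZMod q) _ (u : ZMod q) =
        algebraMap (ZMod q) _ (u : ZMod q) * g
      exact (Algebra.commutes _ _).symm
    have h1 : Nat.card (ZMod q)ˣ = Nat.card f.range :=
      Nat.card_congr (MonoidHom.ofInjective hfinj).toEquiv
    have h2 : Nat.card (ZMod q)ˣ = q - 1 := by
      rw [Nat.card_eq_fintype_card, ZMod.card_units_eq_totient, Nat.totient_prime hq]
    rw [← h2, h1]
    exact Subgroup.card_dvd_of_le hrange
  -- card PG divides q * (q^2 - 1)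
  have hGdvd : Nat.card PG ∣ q * (q ^ 2 - 1) := by
    obtain ⟨m, hm⟩ := hZdvd
    have hmul := Subgroup.card_eq_card_quotient_mul_card_subgroup
      (Subgroup.center (GL (Fin 2) (ZMod q)))
    rw [hcardGL, hm] at hmul
    refine ⟨m, ?_⟩
    have h2 : (q ^ 2 - 1) * (q ^ 2 - q) = q * (q ^ 2 - 1) * (q - 1) := by
      have h3 : q ^ 2 - q = q * (q - 1) := by
        obtain ⟨p, rfl⟩ : ∃ p, q = p + 5 := ⟨q - 5, by omega⟩
        have e1 : (p + 5) ^ 2 = p * p + 10 * p + 25 := by ring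
        have e2 : (p + 5) * (p + 5 - 1) = p * p + 9 * p + 20 := by
          rw [show p + 5 - 1 = p + 4 from rfl]; ring
        omega
      rw [h3]; ring
    have h4 : Nat.card PG * m * (q - 1) = q * (q ^ 2 - 1) * (q - 1) := by
      rw [← h2, hmul]; ring
    exact (Nat.eq_of_mul_eq_mul_right (by omega) h4).symm
  -- order q elements
  have hqG : q ∣ Nat.card PG := by
    rw [← orderOf_projSL_E12 (q := q)]
    exact orderOf_dvd_natCard _
  have hfact : ∀ d : ℕ, q ∣ d → d ∣ q * (q ^ 2 - 1) → d.factorization q = 1 := by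
    intro d hqd hdd
    obtain ⟨m', hm'⟩ := hqd
    have hq21 : ¬ q ∣ q ^ 2 - 1 := by
      intro h
      have h1 : q ∣ q ^ 2 := dvd_pow_self q (by norm_num)
      have h2 := Nat.dvd_sub h1 h
      have hsq : q * q ≥ 5 * 5 := Nat.mul_le_mul hq5 hq5
      have hsq2 : q ^ 2 = q * q := sq q
      rw [show q ^ 2 - (q ^ 2 - 1) = 1 by omega] at h2
      exact hq.one_lt.ne' (Nat.dvd_one.mp h2)
    have hne : q * (q ^ 2 - 1) ≠ 0 := by
      have hsq : q * q ≥ 5 * 5 := Nat.mul_le_mul hq5 hq5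
      have hsq2 : q ^ 2 = q * q := sq q
      have : q ^ 2 - 1 ≠ 0 := by omega
      positivity
    have hm'0 : m' ≠ 0 := by
      rintro rfl
      rw [Nat.mul_zero] at hm'
      rw [hm'] at hdd
      exact hne (Nat.eq_zero_of_zero_dvd hdd)
    have hqm' : ¬ q ∣ m' := by
      intro h
      apply hq21
      have : q * q ∣ q * (q ^ 2 - 1) := dvd_trans (by rw [hm']; exact mul_dvd_mul_left q h) hdd
      exact (mul_dvd_mul_iff_left hq.ne_zero).mp this
    rw [hm', Nat.factorization_mul hq.ne_zero hm'0]
    simp [hq.factorization, Nat.factorization_eq_zero_of_not_dvd hqm']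
  have hfactG : (Nat.card PG).factorization q = 1 := hfact _ hqG hGdvd
  -- the two Sylow subgroups
  let Qu : Sylow q PG := Sylow.ofCard (Subgroup.zpowers (projSL q (E12 q 1)))
    (by rw [Nat.card_zpowers, orderOf_projSL_E12, hfactG, pow_one])
  let Ql : Sylow q PG := Sylow.ofCard (Subgroup.zpowers (projSL q (E21 q 1)))
    (by rw [Nat.card_zpowers, orderOf_projSL_E21, hfactG, pow_one])
  have hQuQl : Qu ≠ Ql := by
    intro h
    apply projSL_E21_not_mem_zpowers (q := q)
    have h2 : projSL q (E21 q 1) ∈ (Ql : Subgroup PG) := Subgroup.mem_zpowers _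
    rw [← h] at h2
    exact h2
  have hSylG1 : Nat.card (Sylow q PG) ≠ 1 := by
    intro h
    haveI := (Nat.card_eq_one_iff_unique.mp h).1
    exact hQuQl (Subsingleton.elim _ _)
  have hSylG : Nat.card (Sylow q PG) = q + 1 := by
    apply divisor_eq hq.two_le _ _ hSylG1
    · -- divides q^2 - 1
      have h1 := Sylow.card_dvd_index Qu
      have h2 : Nat.card (Qu : Subgroup PG) * (Qu : Subgroup PG).index = Nat.card PG :=
        Subgroup.card_mul_index _
      have h3 : Nat.card (Qu : Subgroup PG) = q := by
        rw [Sylow.card_eq_multiplicity, hfactG, pow_one]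
      rw [h3] at h2
      have h4 : q * (Qu : Subgroup PG).index ∣ q * (q ^ 2 - 1) := h2 ▸ hGdvd
      exact dvd_trans h1 ((mul_dvd_mul_iff_left hq.ne_zero).mp h4)
    · -- mod q
      have := card_sylow_modEq_one q PG
      unfold Nat.ModEq at this
      rw [Nat.mod_eq_of_lt hq.one_lt] at this
      exact this
  -- q divides card Y
  have hqY : q ∣ Nat.card Y := by
    have h1 : q ∣ Nat.card Y * Y.index := by rw [Subgroup.card_mul_index]; exact hqG
    exact (hq.dvd_mul.mp h1).resolve_right hqn
  have hfactY : (Nat.card Y).factorization q = 1 :=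
    hfact _ hqY (dvd_trans (Subgroup.card_subgroup_dvd_card Y) hGdvd)
  by_cases hc : Nat.card (Sylow q Y) = 1
  · -- unique Sylow in Y: Y normalizes it, so q+1 = index of normalizer divides Y.index
    obtain ⟨Q⟩ : Nonempty (Sylow q Y) := inferInstance
    have hQnormal : (Q : Subgroup Y).Normal := by
      rw [← Subgroup.normalizer_eq_top_iff, ← Subgroup.index_eq_one]
      rw [Sylow.card_eq_index_normalizer Q] at hc
      exact hc
    have hQ'card : Nat.card ((Q : Subgroup Y).map Y.subtype) =
        q ^ (Nat.card PG).factorization q := by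
      rw [hfactG, pow_one,
        Nat.card_congr ((Q : Subgroup Y).equivMapOfInjective Y.subtype Y.subtype_injective).toEquiv.symm,
        Sylow.card_eq_multiplicity, hfactY, pow_one]
    set Q' : Subgroup PG := (Q : Subgroup Y).map Y.subtype with hQ'
    let Q'' : Sylow q PG := Sylow.ofCard Q' hQ'card
    have hYle : Y ≤ Subgroup.normalizer (Q' : Set PG) := by
      haveI : (Q'.subgroupOf Y).Normal := by
        have heq : Q'.subgroupOf Y = (Q : Subgroup Y) := by
          rw [hQ', Subgroup.subgroupOf, Subgroup.comap_map_eq_self_of_injective Y.subtype_injective]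
        rw [heq]; exact hQnormal
      exact Subgroup.le_normalizer_of_normal_subgroupOf (Subgroup.map_subtype_le _)
    have hidx : (Subgroup.normalizer (Q' : Set PG)).index = q + 1 := by
      have h := (Sylow.card_eq_index_normalizer Q'').symm
      rw [hSylG] at h
      have hco : (Q'' : Set PG) = (Q' : Set PG) := rfl
      rw [hco] at h
      exact h
    have hdvd : (q + 1) ∣ Y.index := hidx ▸ Subgroup.index_dvd_of_le hYle
    have hqodd : Odd q := hq.odd_of_ne_two (by omega)
    have h2 : 2 ∣ Y.index := dvd_trans (Even.two_dvd hqodd.add_one) hdvd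
    rw [Nat.odd_iff] at hodd
    omega
  · -- many Sylows in Y: Y contains every Sylow subgroup of PG, hence the socle
    have hmodY : Nat.card (Sylow q Y) % q = 1 := by
      have := card_sylow_modEq_one q Y
      unfold Nat.ModEq at this
      rwa [Nat.mod_eq_of_lt hq.one_lt] at this
    have hge : q + 1 ≤ Nat.card (Sylow q Y) := by
      have h := Nat.div_add_mod (Nat.card (Sylow q Y)) q
      rcases Nat.eq_zero_or_pos (Nat.card (Sylow q Y) / q) with h0 | h0
      · rw [h0] at h; omega
      · have : q * 1 ≤ q * (Nat.card (Sylow q Y) / q) := Nat.mul_le_mul_left q h0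
        omega
    let F : Sylow q Y → Sylow q PG := fun R => Sylow.ofCard ((R : Subgroup Y).map Y.subtype)
      (by rw [hfactG, pow_one,
            Nat.card_congr ((R : Subgroup Y).equivMapOfInjective Y.subtype
              Y.subtype_injective).toEquiv.symm,
            Sylow.card_eq_multiplicity, hfactY, pow_one])
    have hFinj : Function.Injective F := by
      intro R1 R2 h
      apply Sylow.ext
      have h2 : ((R1 : Subgroup Y).map Y.subtype) = ((R2 : Subgroup Y).map Y.subtype) :=
        congrArg Sylow.toSubgroup h
      exact Subgroup.map_injective Y.subtype_injective h2
    have hle : Nat.card (Sylow q Y) ≤ Nat.card (Sylow q PG) :=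
      Nat.card_le_card_of_injective F hFinj
    have hceq : Nat.card (Sylow q Y) = Nat.card (Sylow q PG) := by omega
    have hFsurj : Function.Surjective F :=
      ((Nat.bijective_iff_injective_and_card F).mpr ⟨hFinj, hceq⟩).surjective
    have hmem : ∀ x : PG, orderOf x = q → (Subgroup.zpowers x : Subgroup PG) ≤ Y := by
      intro x hx
      obtain ⟨R, hR⟩ := hFsurj (Sylow.ofCard (Subgroup.zpowers x)
        (by rw [Nat.card_zpowers, hx, hfactG, pow_one]))
      have h2 : ((R : Subgroup Y).map Y.subtype) = Subgroup.zpowers x :=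
        congrArg Sylow.toSubgroup hR
      rw [← h2]
      exact Subgroup.map_subtype_le _
    have hu : projSL q (E12 q 1) ∈ Y :=
      hmem _ (orderOf_projSL_E12) (Subgroup.mem_zpowers _)
    have hl : projSL q (E21 q 1) ∈ Y :=
      hmem _ (orderOf_projSL_E21) (Subgroup.mem_zpowers _)
    have hsoc : socPGL q ≤ Y := by
      rintro s ⟨A, rfl⟩
      have hclle : Subgroup.closure (elemSet q) ≤ Subgroup.comap (projSL q) Y := by
        rw [Subgroup.closure_le]
        rintro x (⟨t, rfl⟩ | ⟨t, rfl⟩)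
        · show projSL q (E12 q t) ∈ Y
          rw [show E12 q t = (E12 q 1) ^ t.val by
              rw [E12_pow, ZMod.natCast_val, ZMod.cast_id], map_pow]
          exact pow_mem hu _
        · show projSL q (E21 q t) ∈ Y
          rw [show E21 q t = (E21 q 1) ^ t.val by
              rw [E21_pow, ZMod.natCast_val, ZMod.cast_id], map_pow]
          exact pow_mem hl _
      exact hclle (mem_closure_elem A)
    apply hY
    rw [eq_top_iff]
    intro g _
    obtain ⟨y, hy, s, hs, rfl⟩ := hYS g
    exact mul_mem hy (hsoc hs)
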